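/- Let 1 → K → G → H → 1 be a short exact sequence of groups with K finite. If G contains no subgroup isomorphic to the Prüfer p-group ℤ/p^∞, then H contains no subgroup isomorphic to ℤ/p^∞. -/

import Mathlib

/-- The Prüfer `p`-group `ℤ/p^∞`, realised as the `p`-primary component of `ℚ/ℤ`. -/
noncomputable def PruferGroup (p : ℕ) [Fact p.Prime] : AddSubgroup (AddCircle (1 : ℚ)) :=
  AddCommGroup.primaryComponent (AddCircle (1 : ℚ)) p

/-- A group `G` is `ℤ/p^∞`-free if it contains no subgroup isomorphic to the Prüfer
`p`-group. -/
def IsZpInftyFree (p : ℕ) [Fact p.Prime] (G : Type*) [Group G] : Prop :=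
  ¬ ∃ A : Subgroup G, Nonempty (A ≃* Multiplicative (PruferGroup p))

private instance prufer_fact_one_pos : Fact (0 < (1:ℚ)) := ⟨one_pos⟩

/-- The standard generators `1/p^i` of the Prüfer group. -/
noncomputable def pruferGen (p : ℕ) (i : ℕ) : AddCircle (1:ℚ) :=
  (((1:ℚ) / ((p ^ i : ℕ) : ℚ)) : ℚ)

theorem pruferGen_addOrderOf (p : ℕ) [Fact p.Prime] (i : ℕ) :
    addOrderOf (pruferGen p i) = p ^ i := by
  simpa [pruferGen] using AddCircle.addOrderOf_period_div (p := (1:ℚ))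
    (n := p ^ i) (pow_pos (Fact.out (p := p.Prime)).pos i)

theorem pruferGen_zsmul_eq_zero (p : ℕ) [Fact p.Prime] {i : ℕ} {n : ℤ} :
    n • pruferGen p i = 0 ↔ ((p : ℤ) ^ i) ∣ n := by
  rw [← addOrderOf_dvd_iff_zsmul_eq_zero, pruferGen_addOrderOf]
  push_cast
  rfl

theorem pruferGen_smul (p : ℕ) [Fact p.Prime] (i : ℕ) :
    p • pruferGen p (i+1) = pruferGen p i := by
  have hp : ((p:ℚ)) ≠ 0 := by exact_mod_cast (Fact.out (p := p.Prime)).pos.ne'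
  rw [pruferGen, pruferGen, ← AddCircle.coe_nsmul]
  congr 1
  push_cast
  rw [pow_succ, nsmul_eq_mul]
  field_simp

theorem pruferGen_pow_smul (p : ℕ) [Fact p.Prime] (k d : ℕ) :
    (p ^ d) • pruferGen p (k + d) = pruferGen p k := by
  induction d with
  | zero => simp
  | succ d ih =>
    rw [show k + (d + 1) = (k + d) + 1 from rfl, pow_succ, mul_smul,
      pruferGen_smul, ih]

theorem pruferGen_mem (p : ℕ) [Fact p.Prime] (i : ℕ) :
    pruferGen p i ∈ PruferGroup p :=
  ⟨i, by rw [← pruferGen_addOrderOf p i]; exact addOrderOf_nsmul_eq_zero _⟩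

/-- Every element of the Prüfer group is an integer multiple of some
standard generator. -/
theorem pruferGroup_exists_rep (p : ℕ) [Fact p.Prime] (y : AddCircle (1:ℚ))
    (hy : y ∈ PruferGroup p) :
    ∃ kn : ℕ × ℤ, y = kn.2 • pruferGen p kn.1 := by
  obtain ⟨k, hk⟩ := hy
  have hsmul : (p ^ k : ℕ) • y = 0 := by
    rw [← hk]
  induction y using QuotientAddGroup.induction_on with
  | H q =>
  rw [show ((q : AddCircle (1:ℚ))) = ((q:ℚ) : AddCircle (1:ℚ)) from rfl,
    ← AddCircle.coe_nsmul, AddCircle.coe_eq_zero_iff] at hsmul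
  obtain ⟨m, hm⟩ := hsmul
  refine ⟨(k, m), ?_⟩
  rw [pruferGen, ← AddCircle.coe_zsmul]
  congr 1
  have hp : ((p:ℚ)^k) ≠ 0 := by
    exact_mod_cast (pow_pos (Fact.out (p := p.Prime)).pos k).ne'
  have h2 : (m : ℚ) = (p:ℚ)^k * q := by
    simpa [zsmul_eq_mul, nsmul_eq_mul] using hm
  push_cast
  rw [zsmul_eq_mul]
  field_simp
  linarith [h2]

/-- A group containing a sequence `w` with `w (i+1) ^ p = w i` and
`orderOf (w i) = p ^ i` contains a copy of the Prüfer `p`-group. -/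
theorem exists_prufer_subgroup {G : Type*} [Group G] (p : ℕ) [Fact p.Prime]
    (w : ℕ → G) (hw : ∀ i, w (i+1) ^ p = w i) (hord : ∀ i, orderOf (w i) = p ^ i) :
    ∃ A : Subgroup G, Nonempty (A ≃* Multiplicative (PruferGroup p)) := by
  classical
  have hwp : ∀ k d, (w (k + d)) ^ (p ^ d) = w k := by
    intro k d
    induction d with
    | zero => simp
    | succ d ih =>
      rw [show k + (d + 1) = (k + d) + 1 from rfl, pow_succ', pow_mul, hw, ih]
  have key_le : ∀ (k : ℕ) (n : ℤ) (k' : ℕ) (n' : ℤ), k ≤ k' →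
      n • pruferGen p k = n' • pruferGen p k' → w k ^ n = w k' ^ n' := by
    intro k n k' n' hkk h
    set d := k' - k with hd
    have hk' : k' = k + d := by omega
    have hgen : pruferGen p k = ((p ^ d : ℕ) : ℤ) • pruferGen p k' := by
      have hh := pruferGen_pow_smul p k d
      rw [← hk'] at hh
      rw [natCast_zsmul]
      exact hh.symm
    rw [hgen, smul_smul] at h
    have hz : (n * (p ^ d : ℕ) - n') • pruferGen p k' = 0 := by
      rw [sub_smul, h, sub_self]
    have hdvd : ((p : ℤ) ^ k') ∣ (n * (p ^ d : ℕ) - n') :=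
      (pruferGen_zsmul_eq_zero p).mp hz
    have hone : w k' ^ (n * (p ^ d : ℕ) - n') = 1 := by
      rw [← orderOf_dvd_iff_zpow_eq_one, hord]
      exact_mod_cast hdvd
    have hwk : w k = w k' ^ ((p ^ d : ℕ) : ℤ) := by
      rw [zpow_natCast, hk', hwp]
    rw [hwk, ← zpow_mul, mul_comm, ← sub_add_cancel (n * ((p ^ d : ℕ) : ℤ)) n',
      zpow_add, hone, one_mul]
  have key : ∀ (k : ℕ) (n : ℤ) (k' : ℕ) (n' : ℤ),
      n • pruferGen p k = n' • pruferGen p k' → w k ^ n = w k' ^ n' := by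
    intro k n k' n' h
    rcases le_total k k' with hk | hk
    · exact key_le k n k' n' hk h
    · exact (key_le k' n' k n hk h.symm).symm
  let lift : PruferGroup p → G := fun x =>
    w (pruferGroup_exists_rep p x.1 x.2).choose.1 ^
      (pruferGroup_exists_rep p x.1 x.2).choose.2
  have lift_eq : ∀ (x : PruferGroup p) (k : ℕ) (n : ℤ),
      (x : AddCircle (1:ℚ)) = n • pruferGen p k → lift x = w k ^ n := by
    intro x k n h
    exact key _ _ _ _
      (((pruferGroup_exists_rep p x.1 x.2).choose_spec).symm.trans h)
  have lift_add : ∀ a b : PruferGroup p, lift (a + b) = lift a * lift b := by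
    intro a b
    obtain ⟨⟨k, n⟩, ha⟩ := pruferGroup_exists_rep p a.1 a.2
    obtain ⟨⟨k', n'⟩, hb⟩ := pruferGroup_exists_rep p b.1 b.2
    set K := max k k' with hK
    have hgen1 : pruferGen p k = ((p ^ (K - k) : ℕ) : ℤ) • pruferGen p K := by
      have h := pruferGen_pow_smul p k (K - k)
      rw [show k + (K - k) = K by omega] at h
      rw [natCast_zsmul]
      exact h.symm
    have hgen2 : pruferGen p k' = ((p ^ (K - k') : ℕ) : ℤ) • pruferGen p K := by
      have h := pruferGen_pow_smul p k' (K - k')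
      rw [show k' + (K - k') = K by omega] at h
      rw [natCast_zsmul]
      exact h.symm
    have ha' : (a : AddCircle (1:ℚ)) = (n * (p ^ (K - k) : ℕ)) • pruferGen p K := by
      rw [ha, hgen1, smul_smul]
    have hb' : (b : AddCircle (1:ℚ)) = (n' * (p ^ (K - k') : ℕ)) • pruferGen p K := by
      rw [hb, hgen2, smul_smul]
    have hab : ((a + b : PruferGroup p) : AddCircle (1:ℚ)) =
        (n * (p ^ (K - k) : ℕ) + n' * (p ^ (K - k') : ℕ)) • pruferGen p K := by
      rw [AddSubgroup.coe_add, ha', hb', add_smul]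
    rw [lift_eq _ _ _ hab, lift_eq _ _ _ ha', lift_eq _ _ _ hb', zpow_add]
  have lift_zero : lift 0 = 1 := by
    have := lift_eq 0 0 0 (by simp)
    simpa using this
  let f : Multiplicative (PruferGroup p) →* G :=
    { toFun := fun x => lift x.toAdd
      map_one' := lift_zero
      map_mul' := fun x y => lift_add x.toAdd y.toAdd }
  have hinj : Function.Injective f := by
    rw [injective_iff_map_eq_one]
    intro x hx
    obtain ⟨⟨k, n⟩, ha⟩ := pruferGroup_exists_rep p x.toAdd.1 x.toAdd.2
    have h1 : lift x.toAdd = w k ^ n := lift_eq _ _ _ ha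
    rw [show f x = lift x.toAdd from rfl, h1] at hx
    have hdvd : ((p : ℤ) ^ k) ∣ n := by
      have := (orderOf_dvd_iff_zpow_eq_one).mpr hx
      rw [hord] at this
      exact_mod_cast this
    have hcoe : (x.toAdd : AddCircle (1:ℚ)) = 0 := by
      rw [ha]
      exact (pruferGen_zsmul_eq_zero p).mpr hdvd
    have hx0 : x.toAdd = 0 := Subtype.ext hcoe
    have : x = Multiplicative.ofAdd 0 := by
      rw [← hx0]; rfl
    simpa using this
  exact ⟨f.range, ⟨(MonoidHom.ofInjective hinj).symm⟩⟩

/-- Conversely, a group containing a copy of the Prüfer `p`-group contains a sequence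
`x` with `x (i+1) ^ p = x i` and `orderOf (x i) = p ^ i`. -/
theorem exists_seq_of_prufer {H : Type*} [Group H] (p : ℕ) [Fact p.Prime]
    (A : Subgroup H) (e : A ≃* Multiplicative (PruferGroup p)) :
    ∃ x : ℕ → H, (∀ i, x (i+1) ^ p = x i) ∧ ∀ i, orderOf (x i) = p ^ i := by
  set g : ℕ → Multiplicative (PruferGroup p) := fun i =>
    Multiplicative.ofAdd (⟨pruferGen p i, pruferGen_mem p i⟩ : PruferGroup p) with hg
  have hgrel : ∀ i, g (i+1) ^ p = g i := by
    intro i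
    apply Multiplicative.toAdd.injective
    rw [toAdd_pow]
    apply Subtype.ext
    show p • ((⟨pruferGen p (i+1), _⟩ : PruferGroup p) : AddCircle (1:ℚ)) = _
    rw [show ((⟨pruferGen p (i+1), pruferGen_mem p (i+1)⟩ : PruferGroup p) :
      AddCircle (1:ℚ)) = pruferGen p (i+1) from rfl, pruferGen_smul]
    rfl
  have hgord : ∀ i, orderOf (g i) = p ^ i := by
    intro i
    rw [hg]
    rw [orderOf_ofAdd_eq_addOrderOf]
    have := addOrderOf_injective (PruferGroup p).subtype
      (PruferGroup p).subtype_injective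
      (⟨pruferGen p i, pruferGen_mem p i⟩ : PruferGroup p)
    rw [← this]
    exact pruferGen_addOrderOf p i
  refine ⟨fun i => ((e.symm (g i) : A) : H), fun i => ?_, fun i => ?_⟩
  · rw [← SubgroupClass.coe_pow, ← map_pow, hgrel]
  · show orderOf ((e.symm (g i) : A) : H) = p ^ i
    rw [show ((e.symm (g i) : A) : H) = A.subtype (e.symm (g i)) from rfl,
      orderOf_injective A.subtype A.subtype_injective,
      show e.symm (g i) = e.symm.toMonoidHom (g i) from rfl,
      orderOf_injective e.symm.toMonoidHom e.symm.injective, hgord]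

open CategoryTheory in
/-- Lifting a `p`-divisible chain along a surjection with finite kernel. -/
theorem prufer_lift_seq {G H : Type*} [Group G] [Group H] (p : ℕ)
    (π : G →* H) (hπ : Function.Surjective π) [Finite π.ker]
    (x : ℕ → H) (hx : ∀ i, x (i+1) ^ p = x i) :
    ∃ y : ℕ → G, (∀ i, y (i+1) ^ p = y i) ∧ ∀ i, π (y i) = x i := by
  have hxp : ∀ j i, x (j + i) ^ (p ^ i) = x j := by
    intro j i
    induction i with
    | zero => simp
    | succ i ih => rw [pow_succ', pow_mul, ← Nat.add_assoc, hx, ih]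
  have hxp' : ∀ {i j : ℕ}, i ≤ j → x j ^ (p ^ (j - i)) = x i := by
    intro i j h
    have := hxp i (j - i)
    rwa [Nat.add_sub_cancel' h] at this
  let F : ℕᵒᵖ ⥤ Type _ :=
    { obj := fun i => {g : G // π g = x i.unop}
      map := fun {i j} f => TypeCat.ofHom fun g => ⟨g.1 ^ (p ^ (i.unop - j.unop)), by
        rw [map_pow, g.2]
        exact hxp' (leOfHom f.unop)⟩
      map_id := by
        intro i
        refine ConcreteCategory.hom_ext _ _ fun g => ?_
        exact Subtype.ext (by simp)
      map_comp := by
        intro i j k f g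
        refine ConcreteCategory.hom_ext _ _ fun z => ?_
        refine Subtype.ext ?_
        have h1 : j.unop ≤ i.unop := leOfHom f.unop
        have h2 : k.unop ≤ j.unop := leOfHom g.unop
        simp only [types_comp_apply, TypeCat.ofHom_apply, ← pow_mul, ← pow_add]
        rw [Nat.sub_add_sub_cancel h1 h2] }
  have hfin : ∀ i : ℕᵒᵖ, Finite (F.obj i) := by
    intro i
    obtain ⟨g₀, hg₀⟩ := hπ (x i.unop)
    refine Finite.of_injective (fun g : {g : G // π g = x i.unop} =>
      (⟨g₀⁻¹ * g.1, by simp [MonoidHom.mem_ker, hg₀, g.2]⟩ : π.ker)) ?_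
    intro a b hab
    exact Subtype.ext (by simpa [Subtype.ext_iff] using hab)
  have hne : ∀ i : ℕᵒᵖ, Nonempty (F.obj i) := by
    intro i
    obtain ⟨g₀, hg₀⟩ := hπ (x i.unop)
    exact ⟨⟨g₀, hg₀⟩⟩
  obtain ⟨u, hu⟩ := nonempty_sections_of_finite_inverse_system F
  refine ⟨fun i => (u (Opposite.op i)).1, fun i => ?_, fun i => (u (Opposite.op i)).2⟩
  have := hu (f := (homOfLE (Nat.le_succ i)).op)
  have h := congrArg Subtype.val this
  simpa [F, Nat.succ_sub (le_refl i)] using h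

/-- Normalising orders: from a lifted chain, produce a chain with exact `p`-power
orders. -/
theorem prufer_exists_normalized {G H : Type*} [Group G] [Group H] (p : ℕ) [Fact p.Prime]
    (π : G →* H) (n : ℕ) (hn : n ≠ 0)
    (x : ℕ → H) (hxord : ∀ i, orderOf (x i) = p ^ i)
    (y : ℕ → G) (hy : ∀ i, y (i+1) ^ p = y i) (hπy : ∀ i, π (y i) = x i)
    (hcard : ∀ g : G, g ∈ π.ker → g ^ n = 1) :
    ∃ w : ℕ → G, (∀ i, w (i+1) ^ p = w i) ∧ ∀ i, orderOf (w i) = p ^ i := by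
  have hp : p.Prime := Fact.out
  set s := n.factorization p with hs
  set t := n / p ^ s with ht
  have hts : p ^ s * t = n := Nat.ordProj_mul_ordCompl_eq_self n p
  have hpt : ¬ p ∣ t := Nat.not_dvd_ordCompl hp hn
  have hydvd : ∀ i, orderOf (y i) ∣ p ^ i * n := by
    intro i
    apply orderOf_dvd_of_pow_eq_one
    rw [pow_mul]
    apply hcard
    rw [MonoidHom.mem_ker, map_pow, hπy, ← hxord i, pow_orderOf_eq_one]
  set z : ℕ → G := fun i => y (i + s) ^ t with hz
  have hz_rel : ∀ i, z (i+1) ^ p = z i := by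
    intro i
    show (y (i + 1 + s) ^ t) ^ p = y (i + s) ^ t
    rw [← pow_mul, mul_comm, pow_mul, show i + 1 + s = (i + s) + 1 by omega, hy]
  have hz_pow : ∀ i, orderOf (z i) ∣ p ^ (i + 2*s) := by
    intro i
    apply orderOf_dvd_of_pow_eq_one
    show (y (i + s) ^ t) ^ p ^ (i + 2*s) = 1
    rw [← pow_mul]
    apply orderOf_dvd_iff_pow_eq_one.mp
    calc orderOf (y (i + s)) ∣ p ^ (i + s) * n := hydvd (i + s)
    _ ∣ t * p ^ (i + 2*s) := dvd_of_eq (by rw [← hts]; ring)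
  have hz_lower : ∀ i, p ^ (i + s) ∣ orderOf (z i) := by
    intro i
    have hcop : (orderOf (x (i + s))).Coprime t := by
      rw [hxord]
      exact ((Nat.Prime.coprime_iff_not_dvd hp).mpr hpt).pow_left _
    have hord : orderOf (π (z i)) = p ^ (i + s) := by
      show orderOf (π (y (i + s) ^ t)) = _
      rw [map_pow, hπy, hcop.orderOf_pow, hxord]
    rw [← hord]
    exact orderOf_map_dvd π (z i)
  choose b hble hb using fun i => (Nat.dvd_prime_pow hp).mp (hz_pow i)
  have hbge : ∀ i, i + s ≤ b i := by
    intro i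
    have h := hz_lower i
    rw [hb i] at h
    exact (Nat.pow_dvd_pow_iff_le_right hp.one_lt).mp h
  have hstep : ∀ i, orderOf (z (i+1)) = p * orderOf (z i) := by
    intro i
    have hb1 : b (i+1) ≠ 0 := by have := hbge (i+1); omega
    have h1 : orderOf (z i) = p ^ (b (i+1) - 1) := by
      rw [← hz_rel i, orderOf_pow' _ hp.pos.ne', hb (i+1),
        Nat.gcd_eq_right (dvd_pow_self p hb1)]
      have h2 : p ^ b (i+1) = p ^ (b (i+1) - 1) * p := by
        rw [← pow_succ]; congr 1; omega
      rw [h2, Nat.mul_div_cancel _ hp.pos]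
    rw [h1, hb (i+1), ← pow_succ']
    congr 1
    omega
  have hcum : ∀ i, orderOf (z i) = p ^ (i + b 0) := by
    intro i
    induction i with
    | zero => simpa using hb 0
    | succ i ih => rw [hstep, ih, ← pow_succ']; congr 1; omega
  refine ⟨fun i => z i ^ (p ^ (b 0)), fun i => ?_, fun i => ?_⟩
  · show (z (i+1) ^ p ^ b 0) ^ p = z i ^ p ^ b 0
    rw [← pow_mul, mul_comm, pow_mul, hz_rel]
  · show orderOf (z i ^ p ^ b 0) = p ^ i
    rw [orderOf_pow' _ (pow_pos hp.pos _).ne', hcum,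
      Nat.gcd_eq_right (pow_dvd_pow p (by omega)),
      pow_add, Nat.mul_div_cancel _ (pow_pos hp.pos _)]

/-- If `1 → K → G → H → 1` is a short exact sequence of groups with `K` finite and `G`
`ℤ/p^∞`-free, then `H` is `ℤ/p^∞`-free. -/
theorem zpInftyFree_quotient_of_finite_kernel (p : ℕ) [Fact p.Prime]
    {K G H : Type*} [Group K] [Group G] [Group H] [Finite K]
    (ι : K →* G) (π : G →* H)
    (hι : Function.Injective ι) (hπ : Function.Surjective π)
    (hexact : ι.range = π.ker)
    (hG : IsZpInftyFree p G) :
    IsZpInftyFree p H := by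
  intro h
  obtain ⟨A, ⟨e⟩⟩ := h
  obtain ⟨x, hx, hxord⟩ := exists_seq_of_prufer p A e
  have hker_fin : Finite π.ker := by
    have hfin : Finite ι.range :=
      Finite.of_surjective (fun k : K => (⟨ι k, ⟨k, rfl⟩⟩ : ι.range))
        (by rintro ⟨g, k, rfl⟩; exact ⟨k, rfl⟩)
    exact hexact ▸ hfin
  obtain ⟨y, hy, hπy⟩ := prufer_lift_seq p π hπ x hx
  set n := Nat.card π.ker with hn_def
  have hn : n ≠ 0 := Nat.card_pos.ne'
  have hcard : ∀ g : G, g ∈ π.ker → g ^ n = 1 := by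
    intro g hg
    have h1 : (⟨g, hg⟩ : π.ker) ^ n = 1 := pow_card_eq_one'
    have h2 := congrArg (Subtype.val : π.ker → G) h1
    simpa using h2
  obtain ⟨w, hw, hword⟩ := prufer_exists_normalized p π n hn x hxord y hy hπy hcard
  exact hG (exists_prufer_subgroup p w hw hword)
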